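/- arXiv:1507.01741 — 4 statements merged into one kernel-verified Lean document; each statement's English description precedes it below -/
import Mathlib

section
/- Convergence of the noise-free Landweber iteration: if m lies in the range of L, 0 < ω, and ω·‖L‖² ≤ 1, then the Landweber iterates f_k(m) converge in norm, as k → ∞, to the minimum-norm solution f†, i.e. to the unique element f† of the orthogonal complement of the kernel of L satisfying L f† = m. -/
open ContinuousLinearMap Filter
open scoped RealInnerProductSpace

variable {H₁ H₂ : Type*}
  [NormedAddCommGroup H₁] [InnerProductSpace ℝ H₁] [CompleteSpace H₁]
  [NormedAddCommGroup H₂] [InnerProductSpace ℝ H₂] [CompleteSpace H₂]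

/-- The Landweber iteration with data `g` and step size `ω`:
`f₀ = 0`, `f_{k+1} = f_k - ω • L*(L f_k - g)`. -/
noncomputable def landweber (L : H₁ →L[ℝ] H₂) (ω : ℝ) (g : H₂) : ℕ → H₁
  | 0 => 0
  | k + 1 =>
      landweber L ω g k - ω • (ContinuousLinearMap.adjoint L) (L (landweber L ω g k) - g)

theorem stmt_11 (L : H₁ →L[ℝ] H₂) (m : H₂) (hm : m ∈ LinearMap.range (L : H₁ →ₗ[ℝ] H₂))
    (ω : ℝ) (hω : 0 < ω) (hωL : ω * ‖L‖ ^ 2 ≤ 1) :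
    ∃ fdag : H₁, (L fdag = m ∧ fdag ∈ (LinearMap.ker (L : H₁ →ₗ[ℝ] H₂))ᗮ) ∧
      Tendsto (fun k => landweber L ω m k) atTop (nhds fdag) := by
  obtain ⟨f, hf⟩ := hm
  rw [ContinuousLinearMap.coe_coe] at hf
  set S : H₁ →L[ℝ] H₁ :=
    ContinuousLinearMap.id ℝ H₁ - ω • ((ContinuousLinearMap.adjoint L).comp L) with hS
  have happ : ∀ x, S x = x - ω • (ContinuousLinearMap.adjoint L) (L x) := by
    intro x; simp [hS]
  have hinner : ∀ x y : H₁, ⟪S x, y⟫ = ⟪x, y⟫ - ω * ⟪L x, L y⟫ := by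
    intro x y
    rw [happ, inner_sub_left, real_inner_smul_left, adjoint_inner_left]
  have hsym : ∀ x y : H₁, ⟪S x, y⟫ = ⟪x, S y⟫ := by
    intro x y
    rw [hinner, real_inner_comm (S y) x, hinner, real_inner_comm x y, real_inner_comm (L x) (L y)]

  have hnormL : ∀ x : H₁, ω * ‖L x‖ ^ 2 ≤ ‖x‖ ^ 2 := by
    intro x
    have h1 : ‖L x‖ ≤ ‖L‖ * ‖x‖ := L.le_opNorm x
    have h2 : ‖L x‖ ^ 2 ≤ ‖L‖ ^ 2 * ‖x‖ ^ 2 := by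
      nlinarith [norm_nonneg (L x), norm_nonneg x, norm_nonneg L]
    calc ω * ‖L x‖ ^ 2 ≤ ω * (‖L‖ ^ 2 * ‖x‖ ^ 2) := by
          exact mul_le_mul_of_nonneg_left h2 hω.le
      _ = (ω * ‖L‖ ^ 2) * ‖x‖ ^ 2 := by ring
      _ ≤ 1 * ‖x‖ ^ 2 := mul_le_mul_of_nonneg_right hωL (sq_nonneg _)
      _ = ‖x‖ ^ 2 := one_mul _
  have hpos : ∀ x : H₁, 0 ≤ ⟪S x, x⟫ := by
    intro x
    rw [hinner, real_inner_self_eq_norm_sq, real_inner_self_eq_norm_sq]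
    nlinarith [hnormL x]
  have hle : ∀ x : H₁, ⟪S x, x⟫ ≤ ‖x‖ ^ 2 := by
    intro x
    rw [hinner, real_inner_self_eq_norm_sq, real_inner_self_eq_norm_sq]
    nlinarith [sq_nonneg ‖L x‖, hω.le]
  -- key inequality: ‖S y‖² ≤ ⟪S y, y⟫
  have hK : ∀ y : H₁, ‖S y‖ ^ 2 ≤ ⟪S y, y⟫ := by
    intro y
    have h1 := hpos (y - S y)
    have h2 : ⟪S (y - S y), y - S y⟫
        = ⟪S y, y⟫ - 2 * ⟪S y, S y⟫ + ⟪S (S y), S y⟫ := by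
      rw [map_sub, inner_sub_left, inner_sub_right, inner_sub_right,
        hsym (S y) y]
      ring
    have h3 : ⟪S (S y), S y⟫ ≤ ‖S y‖ ^ 2 := hle (S y)
    have h4 : ⟪S y, S y⟫ = ‖S y‖ ^ 2 := real_inner_self_eq_norm_sq _
    linarith [h1, h2.symm ▸ h1]
  have hpow_succ : ∀ (n : ℕ) (x : H₁), (S ^ (n + 1)) x = S ((S ^ n) x) := by
    intro n x; rw [pow_succ']; rfl
  have hpow : ∀ (l k : ℕ), ⟪(S ^ (k + l)) f, f⟫ = ⟪(S ^ k) f, (S ^ l) f⟫ := by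
    intro l
    induction l with
    | zero => intro k; simp
    | succ l ih =>
      intro k
      have hkl : k + (l + 1) = (k + 1) + l := by ring
      rw [hkl, ih (k + 1), hpow_succ k f, hsym, ← hpow_succ l f]
  set u : ℕ → H₁ := fun k => (S ^ k) f with hu
  set b : ℕ → ℝ := fun n => ⟪(S ^ n) f, f⟫ with hb
  have hb_nonneg : ∀ n, 0 ≤ b n := by
    intro n
    rcases Nat.even_or_odd n with ⟨j, hj⟩ | ⟨j, hj⟩
    · subst hj
      simp only [hb]
      rw [hpow j j]
      exact real_inner_self_nonneg
    · subst hj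
      simp only [hb]
      have h1 : 2 * j + 1 = j + (j + 1) := by ring
      rw [h1, hpow (j + 1) j, hpow_succ j f, real_inner_comm]
      exact hpos _
  have hb_anti : Antitone b := by
    apply antitone_nat_of_succ_le
    intro n
    rcases Nat.even_or_odd n with ⟨j, hj⟩ | ⟨j, hj⟩
    · subst hj
      simp only [hb]
      have h1 : j + j + 1 = j + (j + 1) := by ring
      rw [h1, hpow (j + 1) j, hpow_succ j f, hpow j j, real_inner_comm]
      calc ⟪S ((S ^ j) f), (S ^ j) f⟫ ≤ ‖(S ^ j) f‖ ^ 2 := hle _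
        _ = ⟪(S ^ j) f, (S ^ j) f⟫ := (real_inner_self_eq_norm_sq _).symm
    · subst hj
      simp only [hb]
      have h1 : 2 * j + 1 + 1 = (j + 1) + (j + 1) := by ring
      have h2 : 2 * j + 1 = j + (j + 1) := by ring
      rw [h1, h2, hpow (j + 1) (j + 1), hpow (j + 1) j, hpow_succ j f,
        real_inner_comm (S ((S ^ j) f)) ((S ^ j) f)]
      calc ⟪S ((S ^ j) f), S ((S ^ j) f)⟫ = ‖S ((S ^ j) f)‖ ^ 2 :=
            real_inner_self_eq_norm_sq _
        _ ≤ ⟪S ((S ^ j) f), (S ^ j) f⟫ := hK _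
  have hbdd : BddBelow (Set.range b) := ⟨0, by rintro x ⟨n, rfl⟩; exact hb_nonneg n⟩
  set β : ℝ := ⨅ n, b n with hβ
  have hb_tendsto : Tendsto b atTop (nhds β) := tendsto_atTop_ciInf hb_anti hbdd
  have hβ_le : ∀ n, β ≤ b n := fun n => ciInf_le hbdd n
  have hdist : ∀ k l : ℕ, ‖u k - u l‖ ^ 2 = b (k + k) - 2 * b (k + l) + b (l + l) := by
    intro k l
    rw [@norm_sub_sq_real]
    have e1 : ‖u k‖ ^ 2 = b (k + k) := by
      simp only [hu, hb]; rw [hpow k k, real_inner_self_eq_norm_sq]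
    have e2 : ‖u l‖ ^ 2 = b (l + l) := by
      simp only [hu, hb]; rw [hpow l l, real_inner_self_eq_norm_sq]
    have e3 : ⟪u k, u l⟫ = b (k + l) := by
      simp only [hu, hb]; rw [hpow l k]
    rw [e1, e2, e3]
  have hcauchy : CauchySeq u := by
    rw [Metric.cauchySeq_iff']
    intro ε hε
    have hsq : (0 : ℝ) < ε ^ 2 := by positivity
    obtain ⟨N₀, hN₀⟩ := (Metric.tendsto_atTop.mp hb_tendsto) (ε ^ 2) hsq
    refine ⟨N₀, fun n hn => ?_⟩
    have hb2N : b (N₀ + N₀) < β + ε ^ 2 := by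
      have := hN₀ (N₀ + N₀) (Nat.le_add_right _ _)
      rw [Real.dist_eq, abs_lt] at this
      linarith [this.2]
    have h1 : b (n + n) ≤ b (n + N₀) := hb_anti (by omega)
    have h2 : b (n + N₀) ≤ b (N₀ + N₀) := hb_anti (by omega)
    have h3 : β ≤ b (n + N₀) := hβ_le _
    have hlt : ‖u n - u N₀‖ ^ 2 < ε ^ 2 := by
      rw [hdist n N₀]; linarith
    have := lt_of_pow_lt_pow_left₀ 2 hε.le hlt
    rwa [dist_eq_norm]
  obtain ⟨p, hp⟩ := cauchySeq_tendsto_of_complete hcauchy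
  have hSp : S p = p := by
    have h1 : Tendsto (fun k => S (u k)) atTop (nhds (S p)) :=
      (S.continuous.tendsto p).comp hp
    have h2 : (fun k => S (u k)) = fun k => u (k + 1) :=
      funext fun k => (hpow_succ k f).symm
    have h3 : Tendsto (fun k => u (k + 1)) atTop (nhds p) :=
      hp.comp (tendsto_add_atTop_nat 1)
    exact tendsto_nhds_unique (h2 ▸ h1) h3
  have hadj : (ContinuousLinearMap.adjoint L) (L p) = 0 := by
    have h1 := happ p
    rw [hSp] at h1
    have h2 : ω • (ContinuousLinearMap.adjoint L) (L p) = 0 := sub_eq_self.mp h1.symm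
    rcases smul_eq_zero.mp h2 with h | h
    · exact absurd h hω.ne'
    · exact h
  have hLp : L p = 0 := by
    have h1 : ⟪L p, L p⟫ = 0 := by
      rw [← adjoint_inner_left L p (L p), hadj, inner_zero_left]
    exact inner_self_eq_zero.mp h1
  have hland : ∀ k, landweber L ω m k = f - u k := by
    intro k
    induction k with
    | zero => simp [landweber, hu]
    | succ k ih =>
      have hneg : L (f - u k) - m = -(L (u k)) := by
        rw [map_sub, hf]; abel
      rw [landweber, ih, hneg, map_neg, smul_neg, sub_neg_eq_add]
      rw [show u (k + 1) = S (u k) from hpow_succ k f, happ]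
      abel
  have htend : Tendsto (fun k => landweber L ω m k) atTop (nhds (f - p)) := by
    have h1 : Tendsto (fun k => f - u k) atTop (nhds (f - p)) :=
      tendsto_const_nhds.sub hp
    simpa only [funext hland] using h1
  have hmem : ∀ k, landweber L ω m k ∈ (LinearMap.ker (L : H₁ →ₗ[ℝ] H₂))ᗮ := by
    intro k
    induction k with
    | zero => simp [landweber]
    | succ k ih =>
      rw [landweber]
      refine Submodule.sub_mem _ ih (Submodule.smul_mem _ _ ?_)
      rw [Submodule.mem_orthogonal]
      intro v hv
      rw [real_inner_comm, adjoint_inner_left]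
      rw [LinearMap.mem_ker, ContinuousLinearMap.coe_coe] at hv
      rw [hv, inner_zero_right]
  refine ⟨f - p, ⟨?_, ?_⟩, htend⟩
  · rw [map_sub, hf, hLp, sub_zero]
  · exact (Submodule.isClosed_orthogonal _).mem_of_tendsto htend
      (Filter.Eventually.of_forall hmem)
end

section
/- Series expansion of the minimum-norm solution: if m lies in the range of L, 0 < ω, and ω·‖L‖² ≤ 1, then the series Σ_{j=0}^∞ (Id_{H₁} − ω·L*L)^j (ω · L* m) converges in H₁ (in the sense of HasSum) and its sum equals the minimum-norm solution f†, i.e. the unique element of the orthogonal complement of the kernel of L satisfying L f† = m. -/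
open ContinuousLinearMap

section aux
variable {E : Type*} [NormedAddCommGroup E] [InnerProductSpace ℝ E]

local notation "⟪" x ", " y "⟫" => @inner ℝ _ _ x y

/-- Cauchy–Schwarz for the semi-inner product induced by a positive symmetric operator. -/
lemma aux_cs (P : E →L[ℝ] E) (hsym : ∀ x y : E, ⟪P x, y⟫ = ⟪x, P y⟫)
    (hpos : ∀ x : E, 0 ≤ ⟪P x, x⟫) (x y : E) :
    ⟪P x, y⟫ ^ 2 ≤ ⟪P x, x⟫ * ⟪P y, y⟫ := by
  have key : ∀ t : ℝ, 0 ≤ ⟪P y, y⟫ * (t * t) + (2 * ⟪P x, y⟫) * t + ⟪P x, x⟫ := by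
    intro t
    have h := hpos (x + t • y)
    have hyx : ⟪P y, x⟫ = ⟪P x, y⟫ := by
      rw [hsym y x, real_inner_comm]
    simp only [map_add, map_smul, inner_add_left, inner_add_right, inner_smul_left,
      inner_smul_right, conj_trivial] at h
    rw [hyx] at h
    nlinarith [h]
  have hd := discrim_le_zero key
  rw [discrim] at hd
  nlinarith [hd]

/-- A positive symmetric operator bounded above by the identity is a contraction. -/
lemma aux_contraction (P : E →L[ℝ] E) (hsym : ∀ x y : E, ⟪P x, y⟫ = ⟪x, P y⟫)
    (hpos : ∀ x : E, 0 ≤ ⟪P x, x⟫) (hle : ∀ x : E, ⟪P x, x⟫ ≤ ‖x‖ ^ 2) (x : E) :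
    ‖P x‖ ≤ ‖x‖ := by
  have h := aux_cs P hsym hpos x (P x)
  rw [real_inner_self_eq_norm_sq] at h
  have h1 : ⟪P x, x⟫ ≤ ‖x‖ ^ 2 := hle x
  have h2 : ⟪P (P x), P x⟫ ≤ ‖P x‖ ^ 2 := hle (P x)
  have h3 : 0 ≤ ⟪P x, x⟫ := hpos x
  have h4 : 0 ≤ ⟪P (P x), P x⟫ := hpos (P x)
  have h5 : ‖P x‖ ^ 2 * ‖P x‖ ^ 2 ≤ ‖x‖ ^ 2 * ‖P x‖ ^ 2 := by nlinarith
  rcases eq_or_ne (P x) 0 with h0 | h0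
  · simp [h0]
  · have hp : 0 < ‖P x‖ ^ 2 := by have := norm_pos_iff.mpr h0; positivity
    have h6 : ‖P x‖ ^ 2 ≤ ‖x‖ ^ 2 := le_of_mul_le_mul_right h5 hp
    nlinarith [norm_nonneg (P x), norm_nonneg x]

end aux

set_option maxHeartbeats 1600000 in
theorem stmt_12
    {H₁ H₂ : Type*}
    [NormedAddCommGroup H₁] [InnerProductSpace ℝ H₁] [CompleteSpace H₁]
    [NormedAddCommGroup H₂] [InnerProductSpace ℝ H₂] [CompleteSpace H₂]
    (L : H₁ →L[ℝ] H₂) (m : H₂) (hm : m ∈ LinearMap.range (L : H₁ →ₗ[ℝ] H₂))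
    (ω : ℝ) (hω : 0 < ω) (hωL : ω * ‖L‖ ^ 2 ≤ 1) :
    ∃ fdag : H₁, (L fdag = m ∧ fdag ∈ (LinearMap.ker (L : H₁ →ₗ[ℝ] H₂))ᗮ) ∧
      HasSum
        (fun j : ℕ =>
          ((ContinuousLinearMap.id ℝ H₁ - ω • (ContinuousLinearMap.adjoint L ∘L L)) ^ j)
            (ω • (ContinuousLinearMap.adjoint L) m))
        fdag := by
  classical
  set A : H₁ →L[ℝ] H₁ := ω • (ContinuousLinearMap.adjoint L ∘L L) with hA
  set T : H₁ →L[ℝ] H₁ := ContinuousLinearMap.id ℝ H₁ - A with hT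
  have hT1 : T = 1 - A := by rw [hT, ContinuousLinearMap.one_def]
  have hA1 : A = 1 - T := by rw [hT1]; abel
  -- basic inner-product identities
  have hAx : ∀ x : H₁, A x = ω • (ContinuousLinearMap.adjoint L) (L x) := by
    intro x; rfl
  have hAinner : ∀ x y : H₁, (inner ℝ (A x) y : ℝ) = ω * inner ℝ (L x) (L y) := by
    intro x y
    rw [hAx, real_inner_smul_left, ContinuousLinearMap.adjoint_inner_left]
  have hAsym : ∀ x y : H₁, (inner ℝ (A x) y : ℝ) = inner ℝ x (A y) := by
    intro x y
    calc (inner ℝ (A x) y : ℝ) = ω * inner ℝ (L x) (L y) := hAinner x y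
      _ = ω * inner ℝ (L y) (L x) := by rw [real_inner_comm]
      _ = inner ℝ (A y) x := (hAinner y x).symm
      _ = inner ℝ x (A y) := real_inner_comm _ _
  have hAself : ∀ x : H₁, (inner ℝ (A x) x : ℝ) = ω * ‖L x‖ ^ 2 := by
    intro x; rw [hAinner, real_inner_self_eq_norm_sq]
  have hApos : ∀ x : H₁, 0 ≤ (inner ℝ (A x) x : ℝ) := by
    intro x; rw [hAself]; positivity
  have hAnormsq : ∀ x : H₁, ‖A x‖ ^ 2 ≤ ω * ‖L x‖ ^ 2 := by
    intro x
    have h1 : ‖A x‖ ≤ ω * (‖L‖ * ‖L x‖) := by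
      rw [hAx, norm_smul, Real.norm_eq_abs, abs_of_pos hω]
      gcongr
      calc ‖(ContinuousLinearMap.adjoint L) (L x)‖ ≤ ‖ContinuousLinearMap.adjoint L‖ * ‖L x‖ :=
            (ContinuousLinearMap.adjoint L).le_opNorm (L x)
        _ = ‖L‖ * ‖L x‖ := by
            rw [LinearIsometryEquiv.norm_map]
    have h2 : 0 ≤ ω * (‖L‖ * ‖L x‖) := by positivity
    have h3 : ‖A x‖ ^ 2 ≤ (ω * (‖L‖ * ‖L x‖)) ^ 2 := by
      exact pow_le_pow_left₀ (norm_nonneg _) h1 2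
    have h4 : ‖L x‖ ≥ 0 := norm_nonneg _
    nlinarith [h3, mul_le_mul_of_nonneg_right hωL (mul_nonneg hω.le (sq_nonneg ‖L x‖))]
  have hTapp : ∀ z : H₁, T z = z - A z := by intro z; simp [hT]
  have hTsym : ∀ x y : H₁, (inner ℝ (T x) y : ℝ) = inner ℝ x (T y) := by
    intro x y
    calc (inner ℝ (T x) y : ℝ) = inner ℝ x y - inner ℝ (A x) y := by rw [hTapp, inner_sub_left]
      _ = inner ℝ x y - inner ℝ x (A y) := by rw [hAsym]
      _ = inner ℝ x (y - A y) := by rw [inner_sub_right]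
      _ = inner ℝ x (T y) := by rw [← hTapp]
  have hLx : ∀ x : H₁, ‖L x‖ ≤ ‖L‖ * ‖x‖ := fun x => L.le_opNorm x
  have hTself : ∀ x : H₁, (inner ℝ (T x) x : ℝ) = ‖x‖ ^ 2 - ω * ‖L x‖ ^ 2 := by
    intro x
    rw [hTapp, inner_sub_left, real_inner_self_eq_norm_sq, hAself]
  have hTpos : ∀ x : H₁, 0 ≤ (inner ℝ (T x) x : ℝ) := by
    intro x
    rw [hTself]
    have h1 : ‖L x‖ ^ 2 ≤ ‖L‖ ^ 2 * ‖x‖ ^ 2 := by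
      have := hLx x
      nlinarith [norm_nonneg (L x), norm_nonneg x, norm_nonneg L]
    nlinarith [sq_nonneg ‖x‖, mul_le_mul_of_nonneg_right hωL (sq_nonneg ‖x‖)]
  have hTle : ∀ x : H₁, (inner ℝ (T x) x : ℝ) ≤ ‖x‖ ^ 2 := by
    intro x
    rw [hTself]
    nlinarith [sq_nonneg ‖L x‖]
  have hTcontr : ∀ x : H₁, ‖T x‖ ≤ ‖x‖ := aux_contraction T hTsym hTpos hTle
  have hkey : ∀ w : H₁, ‖A w‖ ^ 2 ≤ ‖w‖ ^ 2 - ‖T w‖ ^ 2 := by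
    intro w
    have hexp : ‖T w‖ ^ 2 = ‖w‖ ^ 2 - 2 * inner ℝ w (A w) + ‖A w‖ ^ 2 := by
      rw [hTapp]
      exact norm_sub_sq_real w (A w)
    have h1 : (inner ℝ w (A w) : ℝ) = ω * ‖L w‖ ^ 2 := by
      rw [← hAsym, hAself]
    have h2 := hAnormsq w
    nlinarith [h2]
  have hc : Commute T A := by
    rw [hT1]; exact (Commute.one_left A).sub_left (Commute.refl A)
  have hTpowsym : ∀ (n : ℕ) (x y : H₁), (inner ℝ ((T ^ n) x) y : ℝ) = inner ℝ x ((T ^ n) y) := by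
    intro n
    induction n with
    | zero => intro x y; simp
    | succ n ih =>
      intro x y
      rw [pow_succ, ContinuousLinearMap.mul_apply, ContinuousLinearMap.mul_apply]
      rw [ih (T x) y, hTsym]
      congr 1
      simpa [ContinuousLinearMap.mul_apply] using
        DFunLike.congr_fun ((Commute.refl T).pow_right n).eq y
  -- positivity of T^n * P for suitable P
  have hposgen : ∀ (P : H₁ →L[ℝ] H₁), (∀ x : H₁, 0 ≤ (inner ℝ (P x) x : ℝ)) →
      (∀ x : H₁, 0 ≤ (inner ℝ ((T * P) x) x : ℝ)) → Commute T P →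
      ∀ (n : ℕ) (x : H₁), 0 ≤ (inner ℝ ((T ^ n * P) x) x : ℝ) := by
    intro P hP hTP hcP n
    induction n using Nat.strong_induction_on with
    | _ n ih =>
      match n with
      | 0 => simpa using hP
      | 1 => simpa [pow_one] using hTP
      | (n + 2) =>
        intro x
        have hcTnP : Commute T (T ^ n * P) := ((Commute.refl T).pow_right n).mul_right hcP
        have e1 : T ^ (n + 1 + 1) * P = T * ((T ^ n * P) * T) := by
          calc T ^ (n + 1 + 1) * P = (T * T ^ n * T) * P := by rw [pow_succ, pow_succ']
            _ = T * (T ^ n * (T * P)) := by noncomm_ring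
            _ = T * (T ^ n * (P * T)) := by rw [hcP.eq]
            _ = T * ((T ^ n * P) * T) := by noncomm_ring
        rw [e1]
        have e2 : (T * ((T ^ n * P) * T)) x = T ((T ^ n * P) (T x)) := rfl
        rw [e2, hTsym]
        have e3 : (T ^ n * P) (T x) = (T ^ n * P) (T x) := rfl
        exact ih n (by omega) (T x)
  have hTApos : ∀ x : H₁, 0 ≤ (inner ℝ ((T * A) x) x : ℝ) := by
    intro x
    have e : (T * A) x = A x - A (A x) := by
      rw [ContinuousLinearMap.mul_apply, hTapp]
    rw [e, inner_sub_left, hAself]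
    have : (inner ℝ (A (A x)) x : ℝ) = ‖A x‖ ^ 2 := by
      rw [hAsym, real_inner_comm, real_inner_self_eq_norm_sq]
    rw [this]
    have := hAnormsq x
    linarith
  have hTnApos : ∀ (n : ℕ) (x : H₁), 0 ≤ (inner ℝ ((T ^ n * A) x) x : ℝ) :=
    hposgen A hApos hTApos hc
  have hTnpos : ∀ (n : ℕ) (x : H₁), 0 ≤ (inner ℝ ((T ^ n) x) x : ℝ) := by
    have h := hposgen 1 (by intro x; simpa using real_inner_self_nonneg)
      (by intro x; simpa [mul_one] using hTpos x) (Commute.one_right T)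
    intro n x
    simpa [mul_one] using h n x
  -- symmetry of T^n * A
  have htermsym : ∀ (j : ℕ) (x y : H₁),
      (inner ℝ ((T ^ j * A) x) y : ℝ) = inner ℝ x ((T ^ j * A) y) := by
    intro j x y
    have hAc : A ((T ^ j) y) = (T ^ j) (A y) := by
      simpa [ContinuousLinearMap.mul_apply] using
        DFunLike.congr_fun ((hc.pow_left j).symm).eq y
    calc (inner ℝ ((T ^ j * A) x) y : ℝ) = inner ℝ ((T ^ j) (A x)) y := rfl
      _ = inner ℝ (A x) ((T ^ j) y) := hTpowsym j (A x) y
      _ = inner ℝ x (A ((T ^ j) y)) := hAsym x ((T ^ j) y)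
      _ = inner ℝ x ((T ^ j) (A y)) := by rw [hAc]
      _ = inner ℝ x ((T ^ j * A) y) := rfl
  -- geometric sum identity
  have hgeom : ∀ M : ℕ, ∑ j ∈ Finset.range M, T ^ j * A = 1 - T ^ M := by
    intro M
    have h := geom_sum_mul T M
    have h2 : (∑ j ∈ Finset.range M, T ^ j) * A
        = -((∑ j ∈ Finset.range M, T ^ j) * (T - 1)) := by
      rw [hA1]; noncomm_ring
    calc ∑ j ∈ Finset.range M, T ^ j * A = (∑ j ∈ Finset.range M, T ^ j) * A :=
          (Finset.sum_mul _ _ _).symm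
      _ = -((∑ j ∈ Finset.range M, T ^ j) * (T - 1)) := h2
      _ = -(T ^ M - 1) := by rw [h]
      _ = 1 - T ^ M := by rw [neg_sub]
  -- finite sums of T^j * A are contractions
  have hBcontr : ∀ (t : Finset ℕ) (x : H₁), ‖(∑ j ∈ t, T ^ j * A) x‖ ≤ ‖x‖ := by
    intro t x
    obtain ⟨M, htM⟩ := t.exists_nat_subset_range
    apply aux_contraction (∑ j ∈ t, T ^ j * A)
    · intro x y
      simp only [ContinuousLinearMap.sum_apply, sum_inner, inner_sum]
      exact Finset.sum_congr rfl fun j _ => htermsym j x y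
    · intro x
      simp only [ContinuousLinearMap.sum_apply, sum_inner]
      exact Finset.sum_nonneg fun j _ => hTnApos j x
    · intro x
      have hsplit : ∑ j ∈ Finset.range M, T ^ j * A
          = (∑ j ∈ Finset.range M \ t, T ^ j * A) + ∑ j ∈ t, T ^ j * A :=
        (Finset.sum_sdiff htM).symm
      have h1 : (1 : H₁ →L[ℝ] H₁) - ∑ j ∈ t, T ^ j * A
          = T ^ M + ∑ j ∈ Finset.range M \ t, T ^ j * A := by
        have hg := hgeom M
        rw [hsplit] at hg
        have e : (∑ j ∈ Finset.range M \ t, T ^ j * A)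
            = 1 - T ^ M - ∑ j ∈ t, T ^ j * A := by
          rw [← hg]; abel
        rw [e]; abel
      have h2 : 0 ≤ (inner ℝ (((1 : H₁ →L[ℝ] H₁) - ∑ j ∈ t, T ^ j * A) x) x : ℝ) := by
        rw [h1]
        rw [ContinuousLinearMap.add_apply, inner_add_left]
        have hb : 0 ≤ (inner ℝ ((∑ j ∈ Finset.range M \ t, T ^ j * A) x) x : ℝ) := by
          simp only [ContinuousLinearMap.sum_apply, sum_inner]
          exact Finset.sum_nonneg fun j _ => hTnApos j x
        have ha := hTnpos M x
        linarith
      rw [ContinuousLinearMap.sub_apply, inner_sub_left, ContinuousLinearMap.one_apply,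
        real_inner_self_eq_norm_sq] at h2
      linarith
  -- pow contraction
  have hTncontr : ∀ (n : ℕ) (x : H₁), ‖(T ^ n) x‖ ≤ ‖x‖ := by
    intro n
    induction n with
    | zero => intro x; simp
    | succ n ih =>
      intro x
      have e : (T ^ (n + 1)) x = (T ^ n) (T x) := by
        rw [pow_succ]; rfl
      rw [e]
      exact le_trans (ih (T x)) (hTcontr x)
  -- construct the minimum-norm solution
  obtain ⟨f₀, hf₀⟩ := hm
  haveI : CompleteSpace (LinearMap.ker (L : H₁ →ₗ[ℝ] H₂)) := (ContinuousLinearMap.isClosed_ker L).completeSpace_coe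
  set fdag : H₁ := f₀ - (Submodule.orthogonalProjectionOnto (LinearMap.ker (L : H₁ →ₗ[ℝ] H₂)) f₀ : H₁) with hfdag
  have hmem : fdag ∈ (LinearMap.ker (L : H₁ →ₗ[ℝ] H₂))ᗮ := by exact Submodule.sub_starProjection_mem_orthogonal f₀
  have hLfdag : L fdag = m := by
    have hker : L ((Submodule.orthogonalProjectionOnto (LinearMap.ker (L : H₁ →ₗ[ℝ] H₂)) f₀ : H₁)) = 0 :=
      (Submodule.orthogonalProjectionOnto (LinearMap.ker (L : H₁ →ₗ[ℝ] H₂)) f₀).2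
    rw [hfdag, map_sub, hker, show L f₀ = m from hf₀, sub_zero]
  set x₀ : H₁ := ω • (ContinuousLinearMap.adjoint L) m with hx₀def
  have hx₀ : x₀ = A fdag := by rw [hx₀def, hAx, hLfdag]
  -- fdag lies in the closure of the range of A
  have horth : (LinearMap.range (A : H₁ →ₗ[ℝ] H₁))ᗮ = LinearMap.ker (L : H₁ →ₗ[ℝ] H₂) := by
    ext v
    constructor
    · intro hv
      have h1 : (inner ℝ (A v) v : ℝ) = 0 := hv (A v) ⟨v, rfl⟩
      rw [hAself] at h1
      have h2 : ‖L v‖ ^ 2 = 0 := (mul_eq_zero.mp h1).resolve_left hω.ne'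
      have h3 : L v = 0 := norm_eq_zero.mp (sq_eq_zero_iff.mp h2)
      exact LinearMap.mem_ker.mpr h3
    · intro hv
      have hAv : A v = 0 := by
        rw [hAx, show L v = 0 from LinearMap.mem_ker.mp hv, map_zero, smul_zero]
      intro u hu
      obtain ⟨w, rfl⟩ := hu
      show (inner ℝ (A w) v : ℝ) = 0
      rw [hAsym, hAv, inner_zero_right]
  have hclos : fdag ∈ closure ((LinearMap.range (A : H₁ →ₗ[ℝ] H₁)) : Set H₁) := by
    have h1 : (LinearMap.ker (L : H₁ →ₗ[ℝ] H₂))ᗮ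
        = (LinearMap.range (A : H₁ →ₗ[ℝ] H₁)).topologicalClosure := by
      rw [← horth, Submodule.orthogonal_orthogonal_eq_closure]
    have h2 := hmem
    rw [h1] at h2
    exact h2
  -- A (T^n u) → 0 for every u
  have hATn : ∀ u : H₁, Filter.Tendsto (fun n : ℕ => ‖A ((T ^ n) u)‖)
      Filter.atTop (nhds 0) := by
    intro u
    set a : ℕ → ℝ := fun n => ‖(T ^ n) u‖ ^ 2 with ha
    have hmono : ∀ n, a (n + 1) ≤ a n := by
      intro n
      have e : (T ^ (n + 1)) u = T ((T ^ n) u) := by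
        rw [pow_succ']; rfl
      have := hTcontr ((T ^ n) u)
      rw [ha]
      simp only [e]
      have h0 : (0:ℝ) ≤ ‖(T ^ n) u‖ := norm_nonneg _
      nlinarith [this, norm_nonneg (T ((T ^ n) u))]
    have hanti : Antitone a := antitone_nat_of_succ_le hmono
    have hbdd : BddBelow (Set.range a) := ⟨0, by rintro _ ⟨n, rfl⟩; positivity⟩
    have hconv : Filter.Tendsto a Filter.atTop (nhds (⨅ n, a n)) :=
      tendsto_atTop_ciInf hanti hbdd
    have hdiff : Filter.Tendsto (fun n => a n - a (n + 1)) Filter.atTop (nhds 0) := by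
      have := hconv.sub (hconv.comp (Filter.tendsto_add_atTop_nat 1))
      simpa using this
    have hstep : ∀ n, ‖A ((T ^ n) u)‖ ^ 2 ≤ a n - a (n + 1) := by
      intro n
      have e : (T ^ (n + 1)) u = T ((T ^ n) u) := by rw [pow_succ']; rfl
      have := hkey ((T ^ n) u)
      rw [ha]
      simp only [e]
      linarith
    have hsq : Filter.Tendsto (fun n => ‖A ((T ^ n) u)‖ ^ 2) Filter.atTop (nhds 0) := by
      apply squeeze_zero (fun n => by positivity) hstep hdiff
    have := hsq.sqrt
    simpa [Real.sqrt_sq (norm_nonneg _)] using this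
  -- T^n fdag → 0
  have hTnfdag : Filter.Tendsto (fun n : ℕ => ‖(T ^ n) fdag‖) Filter.atTop (nhds 0) := by
    rw [Metric.tendsto_atTop]
    intro ε hε
    obtain ⟨b, hb, hbd⟩ := Metric.mem_closure_iff.mp hclos (ε / 2) (by linarith)
    obtain ⟨u, rfl⟩ := hb
    have hAu : (A : H₁ →ₗ[ℝ] H₁) u = A u := rfl
    obtain ⟨N, hN⟩ := Metric.tendsto_atTop.mp (hATn u) (ε / 2) (by linarith)
    refine ⟨N, fun n hn => ?_⟩
    have h1 : ‖(T ^ n) fdag‖ ≤ ‖(T ^ n) (fdag - A u)‖ + ‖(T ^ n) (A u)‖ := by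
      have : (T ^ n) fdag = (T ^ n) (fdag - A u) + (T ^ n) (A u) := by
        rw [← map_add]; congr 1; abel
      rw [this]
      exact norm_add_le _ _
    have h2 : ‖(T ^ n) (fdag - A u)‖ ≤ ‖fdag - A u‖ := hTncontr n _
    have h3 : (T ^ n) (A u) = A ((T ^ n) u) := by
      simpa [ContinuousLinearMap.mul_apply] using
        DFunLike.congr_fun (hc.pow_left n).eq u
    have h4 := hN n hn
    rw [Real.dist_eq, sub_zero, abs_of_nonneg (norm_nonneg _)] at h4 ⊢
    have h5 : ‖fdag - A u‖ < ε / 2 := by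
      rw [dist_eq_norm] at hbd
      rw [hAu] at hbd
      exact hbd
    rw [h3] at h1
    linarith
  -- summability
  have hsummable : Summable (fun j : ℕ => (T ^ j) x₀) := by
    rw [summable_iff_vanishing_norm]
    intro ε hε
    rw [Metric.tendsto_atTop] at hTnfdag
    obtain ⟨N, hN⟩ := hTnfdag ε hε
    have hNd := hN N le_rfl
    rw [Real.dist_eq, sub_zero, abs_of_nonneg (norm_nonneg _)] at hNd
    refine ⟨Finset.range N, fun t ht => ?_⟩
    have htN : ∀ j ∈ t, N ≤ j := by
      intro j hj
      by_contra h
      exact (Finset.disjoint_left.mp ht hj) (Finset.mem_range.mpr (by omega))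
    have hterm : ∀ j ∈ t, (T ^ j) x₀ = ((T ^ (j - N) * A) * T ^ N) fdag := by
      intro j hj
      have hop : T ^ j * A = (T ^ (j - N) * A) * T ^ N := by
        calc T ^ j * A = (T ^ (j - N) * T ^ N) * A := by
              rw [← pow_add, Nat.sub_add_cancel (htN j hj)]
          _ = T ^ (j - N) * (T ^ N * A) := by rw [mul_assoc]
          _ = T ^ (j - N) * (A * T ^ N) := by rw [(hc.pow_left N).eq]
          _ = (T ^ (j - N) * A) * T ^ N := by rw [mul_assoc]
      rw [hx₀, show (T ^ j) (A fdag) = (T ^ j * A) fdag from rfl, hop]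
    rw [Finset.sum_congr rfl hterm]
    have e2 : ∑ j ∈ t, ((T ^ (j - N) * A) * T ^ N) fdag
        = (∑ j ∈ t, T ^ (j - N) * A) ((T ^ N) fdag) := by
      rw [ContinuousLinearMap.sum_apply]
      exact Finset.sum_congr rfl fun j _ => rfl
    rw [e2]
    set t' : Finset ℕ := t.image (fun j => j - N) with ht'
    have e3 : ∑ j ∈ t, T ^ (j - N) * A = ∑ k ∈ t', T ^ k * A := by
      rw [ht', Finset.sum_image]
      intro i hi j hj hij
      have := htN i hi
      have := htN j hj
      simp only at hij
      omega
    rw [e3]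
    exact lt_of_le_of_lt (hBcontr t' ((T ^ N) fdag)) hNd
  -- identify the sum
  obtain ⟨a, ha⟩ := hsummable
  have hps : ∀ n : ℕ, ∑ j ∈ Finset.range n, (T ^ j) x₀ = fdag - (T ^ n) fdag := by
    intro n
    have e1 : ∑ j ∈ Finset.range n, (T ^ j) x₀
        = (∑ j ∈ Finset.range n, T ^ j * A) fdag := by
      rw [ContinuousLinearMap.sum_apply]
      exact Finset.sum_congr rfl fun j _ => by rw [hx₀]; rfl
    rw [e1, hgeom n, ContinuousLinearMap.sub_apply, ContinuousLinearMap.one_apply]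
  have htend1 := ha.tendsto_sum_nat
  have htend2 : Filter.Tendsto (fun n : ℕ => ∑ j ∈ Finset.range n, (T ^ j) x₀)
      Filter.atTop (nhds fdag) := by
    simp only [hps]
    have h0 : Filter.Tendsto (fun n : ℕ => (T ^ n) fdag) Filter.atTop (nhds 0) := by
      rw [tendsto_zero_iff_norm_tendsto_zero]
      exact hTnfdag
    have := Filter.Tendsto.sub (tendsto_const_nhds (x := fdag)) h0
    simpa using this
  have hafdag : a = fdag := tendsto_nhds_unique htend1 htend2
  exact ⟨fdag, ⟨hLfdag, hmem⟩, hafdag ▸ ha⟩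
end

section
/- Divergence of the Landweber iteration for data outside the domain of the Moore–Penrose inverse: if 0 < ω, ω·‖L‖² ≤ 1, and the orthogonal projection of m onto the topological closure of the range of L does NOT belong to the range of L, then the norms of the Landweber iterates blow up: ‖f_k(m)‖ → ∞ as k → ∞. -/
open ContinuousLinearMap Filter

open scoped InnerProductSpace

variable {H₁ H₂ : Type*}
  [NormedAddCommGroup H₁] [InnerProductSpace ℝ H₁] [CompleteSpace H₁]
  [NormedAddCommGroup H₂] [InnerProductSpace ℝ H₂] [CompleteSpace H₂]

section aux

/-- inner product symmetry for self-adjoint operators -/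
private lemma sa_inner {E : Type*} [NormedAddCommGroup E] [InnerProductSpace ℝ E]
    [CompleteSpace E] {A : E →L[ℝ] E} (hA : IsSelfAdjoint A) (x y : E) :
    ⟪A x, y⟫_ℝ = ⟪x, A y⟫_ℝ := by
  conv_lhs => rw [← hA.adjoint_eq]
  exact ContinuousLinearMap.adjoint_inner_left A y x

variable (L : H₁ →L[ℝ] H₂) (ω : ℝ)

private noncomputable def lwB : H₁ →L[ℝ] H₁ :=
  1 - ω • ((ContinuousLinearMap.adjoint L) ∘L L)

private noncomputable def lwT : H₂ →L[ℝ] H₂ :=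
  1 - ω • (L ∘L (ContinuousLinearMap.adjoint L))

variable {L ω}

private lemma lwB_apply (x : H₁) :
    lwB L ω x = x - ω • ((ContinuousLinearMap.adjoint L) (L x)) := by
  simp [lwB]

private lemma lwT_apply (x : H₂) :
    lwT L ω x = x - ω • (L ((ContinuousLinearMap.adjoint L) x)) := by
  simp [lwT]

private lemma lwB_sa : IsSelfAdjoint (lwB L ω) := by
  have hX : IsSelfAdjoint ((ContinuousLinearMap.adjoint L) ∘L L) := by
    rw [ContinuousLinearMap.isSelfAdjoint_iff', ContinuousLinearMap.adjoint_comp,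
      ContinuousLinearMap.adjoint_adjoint]
  have h : star ((1 : H₁ →L[ℝ] H₁) - ω • ((ContinuousLinearMap.adjoint L) ∘L L))
      = (1 : H₁ →L[ℝ] H₁) - ω • ((ContinuousLinearMap.adjoint L) ∘L L) := by
    rw [star_sub, star_one, star_smul, star_trivial, hX.star_eq]
  exact h

private lemma lwT_sa : IsSelfAdjoint (lwT L ω) := by
  have hX : IsSelfAdjoint (L ∘L (ContinuousLinearMap.adjoint L)) := by
    rw [ContinuousLinearMap.isSelfAdjoint_iff', ContinuousLinearMap.adjoint_comp,
      ContinuousLinearMap.adjoint_adjoint]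
  have h : star ((1 : H₂ →L[ℝ] H₂) - ω • (L ∘L (ContinuousLinearMap.adjoint L)))
      = (1 : H₂ →L[ℝ] H₂) - ω • (L ∘L (ContinuousLinearMap.adjoint L)) := by
    rw [star_sub, star_one, star_smul, star_trivial, hX.star_eq]
  exact h

/-- positivity of `lwB`. -/
private lemma lwB_inner_nonneg (hω : 0 < ω) (hωL : ω * ‖L‖ ^ 2 ≤ 1) (x : H₁) :
    0 ≤ ⟪lwB L ω x, x⟫_ℝ := by
  rw [lwB_apply, inner_sub_left, real_inner_smul_left,
    ContinuousLinearMap.adjoint_inner_left, real_inner_self_eq_norm_sq,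
    real_inner_self_eq_norm_sq]
  have h1 : ‖L x‖ ≤ ‖L‖ * ‖x‖ := L.le_opNorm x
  have h2 : 0 ≤ ‖L x‖ := norm_nonneg _
  have h3 : 0 ≤ ‖L‖ := norm_nonneg _
  have h4 : 0 ≤ ‖x‖ := norm_nonneg _
  nlinarith [mul_le_mul_of_nonneg_left (pow_le_pow_left₀ h2 h1 2) hω.le,
    mul_le_mul_of_nonneg_right hωL (sq_nonneg ‖x‖), mul_pow ‖L‖ ‖x‖ 2]

/-- key contraction estimate for `lwT`. -/
private lemma lwT_contract (hω : 0 < ω) (hωL : ω * ‖L‖ ^ 2 ≤ 1) (x : H₂) :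
    ‖lwT L ω x‖ ^ 2 + ω * ‖(ContinuousLinearMap.adjoint L) x‖ ^ 2 ≤ ‖x‖ ^ 2 := by
  rw [lwT_apply]
  rw [norm_sub_sq_real]
  have e1 : ⟪x, ω • (L ((ContinuousLinearMap.adjoint L) x))⟫_ℝ
      = ω * ‖(ContinuousLinearMap.adjoint L) x‖ ^ 2 := by
    rw [real_inner_smul_right]
    congr 1
    rw [← ContinuousLinearMap.adjoint_inner_left, real_inner_self_eq_norm_sq]
  rw [e1]
  have h1 : ‖ω • (L ((ContinuousLinearMap.adjoint L) x))‖
      ≤ ω * (‖L‖ * ‖(ContinuousLinearMap.adjoint L) x‖) := by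
    rw [norm_smul, Real.norm_eq_abs, abs_of_pos hω]
    exact mul_le_mul_of_nonneg_left (L.le_opNorm _) hω.le
  have h2 : 0 ≤ ‖ω • (L ((ContinuousLinearMap.adjoint L) x))‖ := norm_nonneg _
  have h3 : 0 ≤ ‖(ContinuousLinearMap.adjoint L) x‖ := norm_nonneg _
  have h4 : 0 ≤ ‖L‖ := norm_nonneg _
  nlinarith [mul_le_mul_of_nonneg_left hωL
    (mul_nonneg hω.le (sq_nonneg ‖(ContinuousLinearMap.adjoint L) x‖))]

private lemma lwT_norm_le (hω : 0 < ω) (hωL : ω * ‖L‖ ^ 2 ≤ 1) (x : H₂) :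
    ‖lwT L ω x‖ ≤ ‖x‖ := by
  have := lwT_contract hω hωL x
  have h1 : 0 ≤ ω * ‖(ContinuousLinearMap.adjoint L) x‖ ^ 2 :=
    mul_nonneg hω.le (sq_nonneg _)
  nlinarith [norm_nonneg (lwT L ω x), norm_nonneg x]


variable {m : H₂}

private lemma landweber_succ (k : ℕ) :
    landweber L ω m (k + 1)
      = lwB L ω (landweber L ω m k) + ω • ((ContinuousLinearMap.adjoint L) m) := by
  have hdef : landweber L ω m (k + 1)
      = landweber L ω m k
        - ω • (ContinuousLinearMap.adjoint L) (L (landweber L ω m k) - m) := rfl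
  rw [hdef, lwB_apply, map_sub, smul_sub]
  abel

private lemma landweber_sum (k : ℕ) :
    landweber L ω m k
      = ∑ j ∈ Finset.range k,
          ((lwB L ω) ^ j) (ω • ((ContinuousLinearMap.adjoint L) m)) := by
  induction k with
  | zero => simp [landweber]
  | succ k ih =>
    rw [landweber_succ, ih, Finset.sum_range_succ', map_sum]
    congr 1
    · refine Finset.sum_congr rfl fun j _ => ?_
      rw [← ContinuousLinearMap.mul_apply, ← pow_succ']

private lemma lwB_pow_inner_nonneg (hω : 0 < ω) (hωL : ω * ‖L‖ ^ 2 ≤ 1) (n : ℕ) (x : H₁) :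
    0 ≤ ⟪((lwB L ω) ^ n) x, x⟫_ℝ := by
  rcases Nat.even_or_odd n with ⟨m', hm⟩ | ⟨m', hm⟩
  · have hpow : (lwB L ω) ^ n = (lwB L ω) ^ m' * (lwB L ω) ^ m' := by
      rw [hm, ← pow_add]
    rw [hpow, ContinuousLinearMap.mul_apply, sa_inner (lwB_sa.pow m')]
    exact real_inner_self_nonneg
  · have hpow : (lwB L ω) ^ n = (lwB L ω) ^ m' * (lwB L ω * (lwB L ω) ^ m') := by
      rw [hm, ← pow_succ', ← pow_add]
      congr 1
      omega
    rw [hpow, ContinuousLinearMap.mul_apply, ContinuousLinearMap.mul_apply,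
      sa_inner (lwB_sa.pow m')]
    exact lwB_inner_nonneg hω hωL _

private lemma lwB_pows_inner_nonneg (hω : 0 < ω) (hωL : ω * ‖L‖ ^ 2 ≤ 1) (i j : ℕ) (b : H₁) :
    0 ≤ ⟪((lwB L ω) ^ i) b, ((lwB L ω) ^ j) b⟫_ℝ := by
  rw [← sa_inner (lwB_sa.pow j), ← ContinuousLinearMap.mul_apply, ← pow_add]
  exact lwB_pow_inner_nonneg hω hωL _ _

private lemma inner_pow_landweber_nonneg (hω : 0 < ω) (hωL : ω * ‖L‖ ^ 2 ≤ 1) (j k : ℕ) :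
    0 ≤ ⟪((lwB L ω) ^ j) (ω • ((ContinuousLinearMap.adjoint L) m)),
        landweber L ω m k⟫_ℝ := by
  rw [landweber_sum, inner_sum]
  exact Finset.sum_nonneg fun i _ => lwB_pows_inner_nonneg hω hωL j i _

private lemma landweber_norm_mono (hω : 0 < ω) (hωL : ω * ‖L‖ ^ 2 ≤ 1) :
    Monotone fun k => ‖landweber L ω m k‖ := by
  apply monotone_nat_of_le_succ
  intro k
  have hstep : landweber L ω m (k + 1)
      = landweber L ω m k
        + ((lwB L ω) ^ k) (ω • ((ContinuousLinearMap.adjoint L) m)) := by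
    rw [landweber_sum (m := m) (k + 1), landweber_sum (m := m) k, Finset.sum_range_succ]
  have hcross : 0 ≤ ⟪landweber L ω m k,
      ((lwB L ω) ^ k) (ω • ((ContinuousLinearMap.adjoint L) m))⟫_ℝ := by
    rw [real_inner_comm]
    exact inner_pow_landweber_nonneg hω hωL k k
  have hexp := norm_add_sq_real (landweber L ω m k)
    (((lwB L ω) ^ k) (ω • ((ContinuousLinearMap.adjoint L) m)))
  rw [← hstep] at hexp
  nlinarith [norm_nonneg (landweber L ω m (k + 1)), norm_nonneg (landweber L ω m k),
    sq_nonneg ‖((lwB L ω) ^ k) (ω • ((ContinuousLinearMap.adjoint L) m))‖]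

private lemma landweber_image (k : ℕ) :
    L (landweber L ω m k) = m - ((lwT L ω) ^ k) m := by
  induction k with
  | zero => simp [landweber]
  | succ k ih =>
    have hdef : landweber L ω m (k + 1)
        = landweber L ω m k
          - ω • (ContinuousLinearMap.adjoint L) (L (landweber L ω m k) - m) := rfl
    rw [hdef, map_sub, map_smul, ih]
    have hsimp : m - ((lwT L ω) ^ k) m - m = -(((lwT L ω) ^ k) m) := by abel
    rw [hsimp, map_neg, map_neg, smul_neg, sub_neg_eq_add]
    rw [pow_succ', ContinuousLinearMap.mul_apply, lwT_apply]
    abel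

private lemma lwT_pow_norm_le (hω : 0 < ω) (hωL : ω * ‖L‖ ^ 2 ≤ 1) (n : ℕ) (x : H₂) :
    ‖((lwT L ω) ^ n) x‖ ≤ ‖x‖ := by
  induction n with
  | zero => simp
  | succ n ih =>
    rw [pow_succ', ContinuousLinearMap.mul_apply]
    exact le_trans (lwT_norm_le hω hωL _) ih

private lemma tendsto_of_sq {f : ℕ → ℝ} (hf : ∀ k, 0 ≤ f k)
    (h : Filter.Tendsto (fun k => f k ^ 2) Filter.atTop (nhds 0)) :
    Filter.Tendsto f Filter.atTop (nhds 0) := by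
  have h2 : Filter.Tendsto (fun k => Real.sqrt (f k ^ 2)) Filter.atTop (nhds 0) := by
    have := h.sqrt
    simpa using this
  exact h2.congr fun k => Real.sqrt_sq (hf k)

private lemma adjoint_pow_tendsto (hω : 0 < ω) (hωL : ω * ‖L‖ ^ 2 ≤ 1) (y : H₂) :
    Filter.Tendsto (fun k => ‖(ContinuousLinearMap.adjoint L) (((lwT L ω) ^ k) y)‖)
      Filter.atTop (nhds 0) := by
  have h1 : ∀ k : ℕ, ω * ‖(ContinuousLinearMap.adjoint L) (((lwT L ω) ^ k) y)‖ ^ 2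
      ≤ ‖((lwT L ω) ^ k) y‖ ^ 2 - ‖((lwT L ω) ^ (k + 1)) y‖ ^ 2 := by
    intro k
    have hc := lwT_contract hω hωL (((lwT L ω) ^ k) y)
    have he : ((lwT L ω) ^ (k + 1)) y = lwT L ω (((lwT L ω) ^ k) y) := by
      rw [pow_succ', ContinuousLinearMap.mul_apply]
    rw [he]
    linarith
  have hsum : ∀ n : ℕ, ∑ k ∈ Finset.range n,
      ω * ‖(ContinuousLinearMap.adjoint L) (((lwT L ω) ^ k) y)‖ ^ 2 ≤ ‖y‖ ^ 2 := by
    intro n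
    calc ∑ k ∈ Finset.range n,
        ω * ‖(ContinuousLinearMap.adjoint L) (((lwT L ω) ^ k) y)‖ ^ 2
        ≤ ∑ k ∈ Finset.range n,
            (‖((lwT L ω) ^ k) y‖ ^ 2 - ‖((lwT L ω) ^ (k + 1)) y‖ ^ 2) :=
          Finset.sum_le_sum fun k _ => h1 k
      _ = ‖((lwT L ω) ^ 0) y‖ ^ 2 - ‖((lwT L ω) ^ n) y‖ ^ 2 :=
          Finset.sum_range_sub' (fun k => ‖((lwT L ω) ^ k) y‖ ^ 2) n
      _ ≤ ‖y‖ ^ 2 := by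
          simp only [pow_zero, ContinuousLinearMap.one_apply]
          nlinarith [sq_nonneg ‖((lwT L ω) ^ n) y‖]
  have hsummable : Summable fun k =>
      ω * ‖(ContinuousLinearMap.adjoint L) (((lwT L ω) ^ k) y)‖ ^ 2 :=
    summable_of_sum_range_le (fun k => mul_nonneg hω.le (sq_nonneg _)) hsum
  have h0 := hsummable.tendsto_atTop_zero
  have hsq : Filter.Tendsto
      (fun k => ‖(ContinuousLinearMap.adjoint L) (((lwT L ω) ^ k) y)‖ ^ 2)
      Filter.atTop (nhds 0) := by
    have := h0.const_mul ω⁻¹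
    simp only [mul_zero] at this
    refine this.congr fun k => ?_
    field_simp
  exact tendsto_of_sq (fun k => norm_nonneg _) hsq

private lemma lwT_pow_tendsto_range (hω : 0 < ω) (hωL : ω * ‖L‖ ^ 2 ≤ 1) (u : H₁) :
    Filter.Tendsto (fun k => ((lwT L ω) ^ k) (L u)) Filter.atTop (nhds 0) := by
  rw [tendsto_zero_iff_norm_tendsto_zero]
  have key : ∀ k : ℕ, ‖((lwT L ω) ^ k) (L u)‖ ^ 2
      ≤ ‖(ContinuousLinearMap.adjoint L) (((lwT L ω) ^ (2 * k)) (L u))‖ * ‖u‖ := by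
    intro k
    have h1 : ⟪((lwT L ω) ^ (2 * k)) (L u), L u⟫_ℝ = ‖((lwT L ω) ^ k) (L u)‖ ^ 2 := by
      rw [two_mul, pow_add, ContinuousLinearMap.mul_apply, sa_inner (lwT_sa.pow k),
        real_inner_self_eq_norm_sq]
    have h2 : ⟪((lwT L ω) ^ (2 * k)) (L u), L u⟫_ℝ
        = ⟪(ContinuousLinearMap.adjoint L) (((lwT L ω) ^ (2 * k)) (L u)), u⟫_ℝ :=
      (ContinuousLinearMap.adjoint_inner_left L u _).symm
    rw [← h1, h2]
    exact real_inner_le_norm _ _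
  have hdouble : Filter.Tendsto (fun k : ℕ => 2 * k) Filter.atTop Filter.atTop :=
    Filter.tendsto_atTop_mono (fun k => Nat.le_mul_of_pos_left k (by norm_num)) Filter.tendsto_id
  have hup := ((adjoint_pow_tendsto hω hωL (L u)).comp hdouble).mul_const ‖u‖
  simp only [zero_mul] at hup
  have hsq : Filter.Tendsto (fun k => ‖((lwT L ω) ^ k) (L u)‖ ^ 2)
      Filter.atTop (nhds 0) :=
    squeeze_zero (fun k => sq_nonneg _) key hup
  exact tendsto_of_sq (fun k => norm_nonneg _) hsq

private lemma lwT_pow_tendsto_closure (hω : 0 < ω) (hωL : ω * ‖L‖ ^ 2 ≤ 1) (x : H₂)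
    (hx : x ∈ (LinearMap.range (L : H₁ →ₗ[ℝ] H₂)).topologicalClosure) :
    Filter.Tendsto (fun k => ((lwT L ω) ^ k) x) Filter.atTop (nhds 0) := by
  rw [NormedAddCommGroup.tendsto_nhds_zero]
  intro ε hε
  have hx' : x ∈ closure ((LinearMap.range (L : H₁ →ₗ[ℝ] H₂) : Submodule ℝ H₂) : Set H₂) := by
    rw [← Submodule.topologicalClosure_coe]
    exact hx
  rw [Metric.mem_closure_iff] at hx'
  obtain ⟨z, hz, hdist⟩ := hx' (ε / 2) (by positivity)
  obtain ⟨u, rfl⟩ := hz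
  have h1 := lwT_pow_tendsto_range hω hωL u
  rw [NormedAddCommGroup.tendsto_nhds_zero] at h1
  filter_upwards [h1 (ε / 2) (by positivity)] with k hk
  have hsplit : ((lwT L ω) ^ k) x
      = ((lwT L ω) ^ k) (x - L u) + ((lwT L ω) ^ k) (L u) := by
    rw [← map_add]
    congr 1
    abel
  have hcon : ‖((lwT L ω) ^ k) (x - L u)‖ ≤ ‖x - L u‖ := lwT_pow_norm_le hω hωL k _
  have hxu : ‖x - L u‖ < ε / 2 := by
    rw [← dist_eq_norm]
    exact hdist
  calc ‖((lwT L ω) ^ k) x‖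
      ≤ ‖((lwT L ω) ^ k) (x - L u)‖ + ‖((lwT L ω) ^ k) (L u)‖ := by
        rw [hsplit]; exact norm_add_le _ _
    _ < ε := by linarith

end aux

theorem stmt_13 (L : H₁ →L[ℝ] H₂) (ω : ℝ) (hω : 0 < ω) (hωL : ω * ‖L‖ ^ 2 ≤ 1)
    (m : H₂)
    (hproj : (Submodule.orthogonalProjectionOnto (LinearMap.range (L : H₁ →ₗ[ℝ] H₂)).topologicalClosure m : H₂)
      ∉ LinearMap.range (L : H₁ →ₗ[ℝ] H₂)) :
    Tendsto (fun k => ‖landweber L ω m k‖) atTop atTop := by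
  classical
  set K := (LinearMap.range (L : H₁ →ₗ[ℝ] H₂)).topologicalClosure with hK
  set P : H₂ := (Submodule.orthogonalProjectionOnto K m : H₂) with hP
  set q : H₂ := m - P with hq
  -- the residual is orthogonal to the closure of the range
  have hqK : q ∈ Kᗮ := Submodule.sub_starProjection_mem_orthogonal (K := K) m
  have hLq : (ContinuousLinearMap.adjoint L) q = 0 := by
    have hw : L ((ContinuousLinearMap.adjoint L) q) ∈ K :=
      Submodule.le_topologicalClosure _ ⟨_, rfl⟩
    have h0 : ⟪q, L ((ContinuousLinearMap.adjoint L) q)⟫_ℝ = 0 := by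
      have := (Submodule.mem_orthogonal K q).mp hqK _ hw
      rwa [real_inner_comm] at this
    have hnorm : ‖(ContinuousLinearMap.adjoint L) q‖ ^ 2 = 0 := by
      rw [← real_inner_self_eq_norm_sq, ContinuousLinearMap.adjoint_inner_left]
      rw [real_inner_comm] at h0
      rw [real_inner_comm]
      exact h0
    have := pow_eq_zero_iff (n := 2) (by norm_num) |>.mp hnorm
    exact norm_eq_zero.mp this
  -- q is a fixed point of all powers of lwT
  have hTq : ∀ k : ℕ, ((lwT L ω) ^ k) q = q := by
    intro k
    induction k with
    | zero => simp
    | succ k ih =>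
      rw [pow_succ, ContinuousLinearMap.mul_apply, lwT_apply, hLq, map_zero,
        smul_zero, sub_zero]
      exact ih
  -- the image of the iterates converges to P
  have himg : ∀ k : ℕ, L (landweber L ω m k) = P - ((lwT L ω) ^ k) P := by
    intro k
    rw [landweber_image]
    have hm' : m = P + q := by rw [hq]; abel
    calc m - ((lwT L ω) ^ k) m
        = (P + q) - ((lwT L ω) ^ k) (P + q) := by rw [← hm']
      _ = (P + q) - (((lwT L ω) ^ k) P + ((lwT L ω) ^ k) q) := by rw [map_add]
      _ = P - ((lwT L ω) ^ k) P := by rw [hTq]; abel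
  have hPK : P ∈ K := SetLike.coe_mem _
  have hLf : Tendsto (fun k => L (landweber L ω m k)) atTop (nhds P) := by
    have hTP := lwT_pow_tendsto_closure hω hωL P hPK
    have := (tendsto_const_nhds (x := P) (f := atTop (α := ℕ))).sub hTP
    rw [sub_zero] at this
    refine this.congr fun k => ?_
    rw [himg]
  -- monotonicity of the norms
  have hmono := landweber_norm_mono (m := m) hω hωL
  rcases tendsto_of_monotone hmono with h | ⟨l, hl⟩
  · exact h
  · exfalso
    -- the squared norms converge, hence form a Cauchy sequence
    have hc : Tendsto (fun k => ‖landweber L ω m k‖ ^ 2) atTop (nhds (l ^ 2)) := by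
      simp only [sq]
      exact hl.mul hl
    have hcc : CauchySeq fun k => ‖landweber L ω m k‖ ^ 2 := hc.cauchySeq
    -- the cross inequality
    have hcross : ∀ {a b : ℕ}, a ≤ b →
        ‖landweber L ω m b - landweber L ω m a‖ ^ 2
          ≤ ‖landweber L ω m b‖ ^ 2 - ‖landweber L ω m a‖ ^ 2 := by
      intro a b hab
      have hsplit : landweber L ω m b = landweber L ω m a
          + ∑ j ∈ Finset.Ico a b,
              ((lwB L ω) ^ j) (ω • ((ContinuousLinearMap.adjoint L) m)) := by
        rw [landweber_sum (m := m) b, landweber_sum (m := m) a,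
          ← Finset.sum_range_add_sum_Ico _ hab]
      have hip : ‖landweber L ω m a‖ ^ 2 ≤ ⟪landweber L ω m b, landweber L ω m a⟫_ℝ := by
        rw [hsplit, inner_add_left, real_inner_self_eq_norm_sq]
        have : 0 ≤ ⟪∑ j ∈ Finset.Ico a b,
            ((lwB L ω) ^ j) (ω • ((ContinuousLinearMap.adjoint L) m)),
            landweber L ω m a⟫_ℝ := by
          rw [sum_inner]
          exact Finset.sum_nonneg fun j _ => inner_pow_landweber_nonneg hω hωL j a
        linarith
      have hexp := norm_sub_sq_real (landweber L ω m b) (landweber L ω m a)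
      linarith
    -- hence the iterates form a Cauchy sequence
    have hCauchy : CauchySeq (landweber L ω m) := by
      rw [Metric.cauchySeq_iff']
      intro ε hε
      obtain ⟨N, hN⟩ := Metric.cauchySeq_iff'.mp hcc (ε ^ 2) (by positivity)
      refine ⟨N, fun n hn => ?_⟩
      have h1 := hcross hn
      have h2 := hN n hn
      rw [Real.dist_eq] at h2
      rw [dist_eq_norm]
      have h3 : ‖landweber L ω m n - landweber L ω m N‖ ^ 2 < ε ^ 2 := by
        have := abs_lt.mp h2
        linarith [this.2]
      nlinarith [norm_nonneg (landweber L ω m n - landweber L ω m N), hε]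
    obtain ⟨flim, hflim⟩ := cauchySeq_tendsto_of_complete hCauchy
    have hLlim : Tendsto (fun k => L (landweber L ω m k)) atTop (nhds (L flim)) :=
      (L.continuous.tendsto flim).comp hflim
    have hfinal : L flim = P := tendsto_nhds_unique hLlim hLf
    exact hproj ⟨flim, hfinal⟩
end

section
/- Finiteness of the discrepancy-principle stopping index: if m lies in the range of L, 0 < ω, ω·‖L‖² ≤ 1, τ > 1, δ > 0, and mᵟ ∈ H₂ satisfies ‖m − mᵟ‖ ≤ δ, then there exists k ∈ ℕ such that the Landweber iterate for the perturbed data satisfies ‖mᵟ − L f_k(mᵟ)‖ ≤ τ·δ. -/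
open ContinuousLinearMap Filter

section aux
open RealInnerProductSpace
variable {H : Type*} [NormedAddCommGroup H] [InnerProductSpace ℝ H]

lemma lw_cs (S : H →L[ℝ] H) (hsym : ∀ x y : H, ⟪S x, y⟫ = ⟪x, S y⟫)
    (hpos : ∀ x : H, 0 ≤ ⟪S x, x⟫) (x y : H) :
    ⟪S x, y⟫ ^ 2 ≤ ⟪S x, x⟫ * ⟪S y, y⟫ := by
  have e1 : ⟪S y, x⟫ = ⟪S x, y⟫ := by rw [hsym y x, real_inner_comm]
  have key : ∀ t : ℝ, 0 ≤ ⟪S x, x⟫ * (t * t) + (2 * ⟪S x, y⟫) * t + ⟪S y, y⟫ := by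
    intro t
    have h := hpos (t • x + y)
    have e : ⟪S (t • x + y), t • x + y⟫
        = ⟪S x, x⟫ * (t * t) + (2 * ⟪S x, y⟫) * t + ⟪S y, y⟫ := by
      simp only [map_add, map_smul, inner_add_left, inner_add_right, real_inner_smul_left,
        real_inner_smul_right, e1]
      ring
    linarith [e ▸ h]
  have hd := discrim_le_zero key
  rw [discrim] at hd
  nlinarith [hd]

lemma lw_norm_sq_le (S : H →L[ℝ] H) (hsym : ∀ x y : H, ⟪S x, y⟫ = ⟪x, S y⟫)
    (hpos : ∀ x : H, 0 ≤ ⟪S x, x⟫) (hbound : ∀ x : H, ⟪S x, x⟫ ≤ ‖x‖ ^ 2) (x : H) :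
    ‖S x‖ ^ 2 ≤ ⟪S x, x⟫ := by
  have h := lw_cs S hsym hpos x (S x)
  have h2 : ⟪S (S x), S x⟫ ≤ ‖S x‖ ^ 2 := hbound (S x)
  have h3 : ⟪S x, S x⟫ = ‖S x‖ ^ 2 := real_inner_self_eq_norm_sq (S x)
  rw [h3] at h
  nlinarith [hpos x, hpos (S x), sq_nonneg (‖S x‖), norm_nonneg (S x)]

end aux

variable {H₁ H₂ : Type*}
  [NormedAddCommGroup H₁] [InnerProductSpace ℝ H₁] [CompleteSpace H₁]
  [NormedAddCommGroup H₂] [InnerProductSpace ℝ H₂] [CompleteSpace H₂]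

open RealInnerProductSpace in
set_option maxHeartbeats 1000000 in
theorem stmt_14 (L : H₁ →L[ℝ] H₂) (m : H₂) (hm : m ∈ LinearMap.range (L : H₁ →ₗ[ℝ] H₂))
    (ω : ℝ) (hω : 0 < ω) (hωL : ω * ‖L‖ ^ 2 ≤ 1)
    (τ δ : ℝ) (hτ : 1 < τ) (hδ : 0 < δ)
    (mδ : H₂) (hmδ : ‖m - mδ‖ ≤ δ) :
    ∃ k : ℕ, ‖mδ - L (landweber L ω mδ k)‖ ≤ τ * δ := by
  obtain ⟨f, hf⟩ := hm
  set S : H₁ →L[ℝ] H₁ := 1 - ω • ((ContinuousLinearMap.adjoint L) ∘L L) with hS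
  set T : H₂ →L[ℝ] H₂ := 1 - ω • (L ∘L (ContinuousLinearMap.adjoint L)) with hT
  -- symmetry
  have hsymS : ∀ x y : H₁, ⟪S x, y⟫ = ⟪x, S y⟫ := by
    intro x y
    simp only [hS, ContinuousLinearMap.sub_apply, ContinuousLinearMap.one_apply,
      ContinuousLinearMap.smul_apply, ContinuousLinearMap.comp_apply,
      inner_sub_left, inner_sub_right, real_inner_smul_left, real_inner_smul_right,
      ContinuousLinearMap.adjoint_inner_left, ContinuousLinearMap.adjoint_inner_right]
  have hLL : ∀ x y : H₂, ⟪L ((ContinuousLinearMap.adjoint L) x), y⟫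
      = ⟪(ContinuousLinearMap.adjoint L) x, (ContinuousLinearMap.adjoint L) y⟫ := by
    intro x y
    rw [real_inner_comm, ← ContinuousLinearMap.adjoint_inner_left, real_inner_comm]
  have hLL2 : ∀ x y : H₂, ⟪x, L ((ContinuousLinearMap.adjoint L) y)⟫
      = ⟪(ContinuousLinearMap.adjoint L) x, (ContinuousLinearMap.adjoint L) y⟫ := by
    intro x y
    rw [← real_inner_comm, hLL y x, real_inner_comm]
  have hsymT : ∀ x y : H₂, ⟪T x, y⟫ = ⟪x, T y⟫ := by
    intro x y
    simp only [hT, ContinuousLinearMap.sub_apply, ContinuousLinearMap.one_apply,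
      ContinuousLinearMap.smul_apply, ContinuousLinearMap.comp_apply,
      inner_sub_left, inner_sub_right, real_inner_smul_left, real_inner_smul_right]
    rw [hLL, hLL2]
  -- quadratic forms
  have hSx : ∀ x : H₁, ⟪S x, x⟫ = ‖x‖ ^ 2 - ω * ‖L x‖ ^ 2 := by
    intro x
    simp only [hS, ContinuousLinearMap.sub_apply, ContinuousLinearMap.one_apply,
      ContinuousLinearMap.smul_apply, ContinuousLinearMap.comp_apply,
      inner_sub_left, real_inner_smul_left, ContinuousLinearMap.adjoint_inner_left,
      real_inner_self_eq_norm_sq]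
  have hTx : ∀ x : H₂, ⟪T x, x⟫ = ‖x‖ ^ 2 - ω * ‖(ContinuousLinearMap.adjoint L) x‖ ^ 2 := by
    intro x
    simp only [hT, ContinuousLinearMap.sub_apply, ContinuousLinearMap.one_apply,
      ContinuousLinearMap.smul_apply, ContinuousLinearMap.comp_apply,
      inner_sub_left, real_inner_smul_left, real_inner_self_eq_norm_sq]
    rw [hLL, real_inner_self_eq_norm_sq]
  have hposS : ∀ x : H₁, 0 ≤ ⟪S x, x⟫ := by
    intro x
    rw [hSx]
    have h1 : ‖L x‖ ≤ ‖L‖ * ‖x‖ := L.le_opNorm x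
    have h2 : ‖L x‖ ^ 2 ≤ ‖L‖ ^ 2 * ‖x‖ ^ 2 := by
      nlinarith [norm_nonneg (L x), norm_nonneg x, norm_nonneg L]
    nlinarith [mul_le_mul_of_nonneg_left h2 hω.le,
      mul_le_mul_of_nonneg_right hωL (sq_nonneg ‖x‖)]
  have hposT : ∀ x : H₂, 0 ≤ ⟪T x, x⟫ := by
    intro x
    rw [hTx]
    have h1 : ‖(ContinuousLinearMap.adjoint L) x‖ ≤ ‖L‖ * ‖x‖ := by
      calc ‖(ContinuousLinearMap.adjoint L) x‖ ≤ ‖ContinuousLinearMap.adjoint L‖ * ‖x‖ :=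
            (ContinuousLinearMap.adjoint L).le_opNorm x
        _ = ‖L‖ * ‖x‖ := by rw [LinearIsometryEquiv.norm_map ContinuousLinearMap.adjoint L]
    have h2 : ‖(ContinuousLinearMap.adjoint L) x‖ ^ 2 ≤ ‖L‖ ^ 2 * ‖x‖ ^ 2 := by
      nlinarith [norm_nonneg ((ContinuousLinearMap.adjoint L) x), norm_nonneg x, norm_nonneg L]
    nlinarith [mul_le_mul_of_nonneg_left h2 hω.le,
      mul_le_mul_of_nonneg_right hωL (sq_nonneg ‖x‖)]
  have hboundS : ∀ x : H₁, ⟪S x, x⟫ ≤ ‖x‖ ^ 2 := by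
    intro x; rw [hSx]
    nlinarith [norm_nonneg (L x), hω.le]
  have hboundT : ∀ x : H₂, ⟪T x, x⟫ ≤ ‖x‖ ^ 2 := by
    intro x; rw [hTx]
    nlinarith [norm_nonneg ((ContinuousLinearMap.adjoint L) x), hω.le]
  have hTcontr : ∀ x : H₂, ‖T x‖ ≤ ‖x‖ := by
    intro x
    have h := lw_norm_sq_le T hsymT hposT hboundT x
    have h2 := hboundT x
    nlinarith [norm_nonneg (T x), norm_nonneg x]
  -- residual identity
  have hres : ∀ k : ℕ, mδ - L (landweber L ω mδ k) = (T ^ k) mδ := by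
    intro k
    induction k with
    | zero => simp [landweber]
    | succ k ih =>
        have : landweber L ω mδ (k + 1) =
            landweber L ω mδ k - ω • (ContinuousLinearMap.adjoint L)
              (L (landweber L ω mδ k) - mδ) := rfl
        rw [this, pow_succ', ContinuousLinearMap.mul_apply, ← ih]
        simp only [hT, ContinuousLinearMap.sub_apply, ContinuousLinearMap.one_apply,
          ContinuousLinearMap.smul_apply, ContinuousLinearMap.comp_apply,
          map_sub, map_smul, smul_sub]
        abel
  -- intertwining
  have hTL : ∀ y : H₁, T (L y) = L (S y) := by
    intro y
    simp only [hS, hT, ContinuousLinearMap.sub_apply, ContinuousLinearMap.one_apply,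
      ContinuousLinearMap.smul_apply, ContinuousLinearMap.comp_apply, map_sub, map_smul]
  have hinter : ∀ (k : ℕ) (x : H₁), (T ^ k) (L x) = L ((S ^ k) x) := by
    intro k
    induction k with
    | zero => intro x; simp
    | succ k ih =>
        intro x
        rw [pow_succ', pow_succ', ContinuousLinearMap.mul_apply,
          ContinuousLinearMap.mul_apply, ih x, hTL]
  -- contraction of powers
  have hTpow : ∀ (k : ℕ) (x : H₂), ‖(T ^ k) x‖ ≤ ‖x‖ := by
    intro k
    induction k with
    | zero => intro x; simp
    | succ k ih =>
        intro x
        rw [pow_succ, ContinuousLinearMap.mul_apply]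
        exact (ih (T x)).trans (hTcontr x)
  -- symmetry of powers of S
  have hsymSpow : ∀ (k : ℕ) (x y : H₁), ⟪(S ^ k) x, y⟫ = ⟪x, (S ^ k) y⟫ := by
    intro k
    induction k with
    | zero => intro x y; simp
    | succ k ih =>
        intro x y
        have comm : ∀ z : H₁, (S ^ k) (S z) = S ((S ^ k) z) := by
          intro z
          rw [← ContinuousLinearMap.mul_apply, ← pow_succ, pow_succ',
            ContinuousLinearMap.mul_apply]
        rw [pow_succ', ContinuousLinearMap.mul_apply, ContinuousLinearMap.mul_apply,
          hsymS, ih, comm]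
  set b : ℕ → ℝ := fun k => ⟪(S ^ k) f, f⟫ with hb
  have hbdef : ∀ k : ℕ, b k = ⟪(S ^ k) f, f⟫ := fun k => rfl
  have hpair : ∀ j i : ℕ, b (j + j + i) = ⟪(S ^ i) ((S ^ j) f), (S ^ j) f⟫ := by
    intro j i
    rw [hbdef, show j + j + i = j + (i + j) by ring, pow_add, pow_add,
      ContinuousLinearMap.mul_apply, ContinuousLinearMap.mul_apply, hsymSpow j]
  have hbeven : ∀ j : ℕ, b (2 * j) = ‖(S ^ j) f‖ ^ 2 := by
    intro j
    rw [show 2 * j = j + j + 0 by ring, hpair j 0, pow_zero, ContinuousLinearMap.one_apply,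
      real_inner_self_eq_norm_sq]
  have hbodd1 : ∀ j : ℕ, b (2 * j + 1) = ⟪S ((S ^ j) f), (S ^ j) f⟫ := by
    intro j
    rw [show 2 * j + 1 = j + j + 1 by ring, hpair j 1, pow_one]
  have hbodd2 : ∀ j : ℕ, b (2 * j + 2) = ‖S ((S ^ j) f)‖ ^ 2 := by
    intro j
    rw [show 2 * j + 2 = j + j + 2 by ring, hpair j 2,
      show (S ^ 2) ((S ^ j) f) = S (S ((S ^ j) f)) by
        rw [pow_two, ContinuousLinearMap.mul_apply],
      hsymS, real_inner_self_eq_norm_sq]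
  have hkey : ∀ j : ℕ, b (2 * j) - b (2 * j + 1) = ω * ‖L ((S ^ j) f)‖ ^ 2 := by
    intro j
    rw [hbeven, hbodd1, hSx]
    ring
  have hbodd : ∀ j : ℕ, 0 ≤ b (2 * j + 1) := by
    intro j
    rw [hbodd1]
    exact hposS _
  have hbodd_dec : ∀ j : ℕ, b (2 * j + 2) ≤ b (2 * j + 1) := by
    intro j
    rw [hbodd1, hbodd2]
    exact lw_norm_sq_le S hsymS hposS hboundS _
  set c : ℝ := ω * ((τ - 1) * δ) ^ 2 with hc
  have hcpos : 0 < c := mul_pos hω (pow_pos (mul_pos (by linarith) hδ) 2)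
  -- find k with small decrement
  have hex : ∃ k : ℕ, b (2 * k) - b (2 * k + 1) ≤ c := by
    by_contra hcon
    push_neg at hcon
    have hdec : ∀ n : ℕ, b (2 * n) ≤ b 0 - n * c := by
      intro n
      induction n with
      | zero => simp
      | succ n ih =>
          have h1 := hcon n
          have h2 := hbodd_dec n
          have e : b (2 * (n + 1)) = b (2 * n + 2) := by congr 1
          have e2 : ((n : ℝ) + 1) * c = n * c + c := by ring
          push_cast
          rw [e, e2]
          linarith
    obtain ⟨n, hn⟩ := exists_nat_gt (b 0 / c)
    have h1 : b 0 < n * c := by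
      rwa [div_lt_iff₀ hcpos] at hn
    have h2 := hdec n
    have h3 : 0 ≤ b (2 * n) := by rw [hbeven]; positivity
    linarith
  obtain ⟨k, hk⟩ := hex
  refine ⟨k, ?_⟩
  rw [hres k]
  have hsplit : (T ^ k) mδ = (T ^ k) (mδ - m) + (T ^ k) m := by
    rw [← map_add]; congr 1; abel
  have h1 : ‖(T ^ k) (mδ - m)‖ ≤ δ := by
    calc ‖(T ^ k) (mδ - m)‖ ≤ ‖mδ - m‖ := hTpow k _
      _ = ‖m - mδ‖ := by rw [norm_sub_rev]
      _ ≤ δ := hmδ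
  have h2 : ‖(T ^ k) m‖ ≤ (τ - 1) * δ := by
    rw [← hf, ContinuousLinearMap.coe_coe, hinter k f]
    have hsq : ‖L ((S ^ k) f)‖ ^ 2 ≤ ((τ - 1) * δ) ^ 2 := by
      have := hkey k
      rw [this] at hk
      have hωpos := hω
      nlinarith
    have hpos : 0 ≤ (τ - 1) * δ := le_of_lt (mul_pos (by linarith) hδ)
    nlinarith [norm_nonneg (L ((S ^ k) f))]
  calc ‖(T ^ k) mδ‖ = ‖(T ^ k) (mδ - m) + (T ^ k) m‖ := by rw [← hsplit]
    _ ≤ ‖(T ^ k) (mδ - m)‖ + ‖(T ^ k) m‖ := norm_add_le _ _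
    _ ≤ δ + (τ - 1) * δ := add_le_add h1 h2
    _ = τ * δ := by ring
end
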